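/- Let C_axis ∈ ℝ^{m×m×m} be the axis core tensor with entries c_{ijk}, and let v ∈ ℝ^m be the vector with coordinates v_j = (−1)^{m+j}. Then the m×m matrix D with entries D_{ik} = Σ_{j=1}^m c_{ijk} v_j is diagonal; explicitly, Σ_{j=1}^m (−1)^{m+j} c_{ijk} = 0 whenever i ≠ k, and Σ_{j=1}^m (−1)^{m+j} c_{iji} = (−1)^{m+i}/6 for every i. -/

import Mathlib

/-- The axis core tensor over `ℝ`. -/
noncomputable def caxis (m : ℕ) : Fin m → Fin m → Fin m → ℝ := fun i j k =>
  if i < j ∧ j < k then 1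
  else if (i < j ∧ j = k) ∨ (i = j ∧ j < k) then 1 / 2
  else if i = j ∧ j = k then 1 / 6
  else 0

lemma alt_sum_Ioo (a b : ℕ) (h : a < b) :
    ∑ j ∈ Finset.Ioo a b, (-1 : ℝ) ^ j =
      (if Even b then 0 else 1) - (if Even (a + 1) then 0 else 1) := by
  rw [← Finset.Ico_add_one_left_eq_Ioo, Finset.sum_Ico_eq_sub _ (show a + 1 ≤ b from h), neg_one_geom_sum, neg_one_geom_sum]

/-- Contracting the axis core tensor along its second index with the alternating
vector `v_j = (−1)^{m+j}` (indices `1,…,m`) yields a diagonal matrix with diagonal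
entries `(−1)^{m+i}/6`. Here Fin-indices are 0-based, so the exponent is `m+j+1`. -/
theorem axis_contraction_alternating_vector_diagonal (m : ℕ) :
    (∀ i k : Fin m, i ≠ k →
        ∑ j : Fin m, (-1 : ℝ) ^ (m + (j : ℕ) + 1) * caxis m i j k = 0) ∧
    (∀ i : Fin m,
        ∑ j : Fin m, (-1 : ℝ) ^ (m + (j : ℕ) + 1) * caxis m i j i
          = (-1 : ℝ) ^ (m + (i : ℕ) + 1) / 6) := by
  constructor
  · intro i k hik
    rcases lt_or_gt_of_ne hik with h | h
    · -- i < k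
      have hne : (i : ℕ) < (k : ℕ) := h
      -- rewrite each term factoring out (-1)^(m+1)
      have key : ∀ j : Fin m, (-1 : ℝ) ^ (m + (j : ℕ) + 1) * caxis m i j k =
          (-1 : ℝ) ^ (m + 1) *
            ((-1 : ℝ) ^ (j : ℕ) *
              (if (i : ℕ) < j ∧ (j : ℕ) < k then 1
               else if ((i : ℕ) < j ∧ (j : ℕ) = k) ∨ ((i : ℕ) = j ∧ (j : ℕ) < k) then 1 / 2
               else if (i : ℕ) = j ∧ (j : ℕ) = k then 1 / 6
               else 0)) := by
        intro j
        have : (-1 : ℝ) ^ (m + (j : ℕ) + 1) = (-1 : ℝ) ^ (m + 1) * (-1 : ℝ) ^ (j : ℕ) := by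
          rw [← pow_add]; ring_nf
        rw [this]
        simp only [caxis, Fin.lt_def, Fin.ext_iff]
        ring
      rw [Finset.sum_congr rfl (fun j _ => key j), ← Finset.mul_sum]
      have hval : ∑ j : Fin m, ((-1 : ℝ) ^ (j : ℕ) *
              (if (i : ℕ) < j ∧ (j : ℕ) < k then 1
               else if ((i : ℕ) < j ∧ (j : ℕ) = k) ∨ ((i : ℕ) = j ∧ (j : ℕ) < k) then 1 / 2
               else if (i : ℕ) = j ∧ (j : ℕ) = k then 1 / 6
               else 0)) = 0 := by
        set g : ℕ → ℝ := fun j =>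
          (-1 : ℝ) ^ j *
              (if (i : ℕ) < j ∧ j < (k : ℕ) then 1
               else if ((i : ℕ) < j ∧ j = (k : ℕ)) ∨ ((i : ℕ) = j ∧ j < (k : ℕ)) then 1 / 2
               else if (i : ℕ) = j ∧ j = (k : ℕ) then 1 / 6
               else 0) with hg
        have : ∑ j : Fin m, g (j : ℕ) = ∑ j ∈ Finset.range m, g j :=
          Fin.sum_univ_eq_sum_range g m
        rw [show (∑ j : Fin m, ((-1 : ℝ) ^ (j : ℕ) *
              (if (i : ℕ) < j ∧ (j : ℕ) < k then 1
               else if ((i : ℕ) < j ∧ (j : ℕ) = k) ∨ ((i : ℕ) = j ∧ (j : ℕ) < k) then 1 / 2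
               else if (i : ℕ) = j ∧ (j : ℕ) = k then 1 / 6
               else 0)) = ∑ j : Fin m, g (j : ℕ)) from rfl, this]
        -- restrict to Icc i k
        have hsub : Finset.Icc (i : ℕ) (k : ℕ) ⊆ Finset.range m := by
          intro x hx
          rw [Finset.mem_Icc] at hx
          exact Finset.mem_range.mpr (lt_of_le_of_lt hx.2 k.isLt)
        have hzero : ∀ x ∈ Finset.range m, x ∉ Finset.Icc (i : ℕ) (k : ℕ) → g x = 0 := by
          intro x _ hx
          rw [Finset.mem_Icc, not_and_or, not_le, not_le] at hx
          rcases hx with hx | hx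
          · have h1 : ¬ ((i : ℕ) < x) := by omega
            have h2 : ¬ ((i : ℕ) = x) := by omega
            simp [hg, h1, h2]
          · have h1 : ¬ (x < (k : ℕ)) := by omega
            have h2 : ¬ (x = (k : ℕ)) := by omega
            simp [hg, h1, h2]
        rw [← Finset.sum_subset hsub hzero]
        have e1 : insert (k : ℕ) (Finset.Ioo (i : ℕ) (k : ℕ)) = Finset.Ioc (i : ℕ) (k : ℕ) :=
          Finset.Ioo_insert_right hne
        have e2 : insert (i : ℕ) (Finset.Ioc (i : ℕ) (k : ℕ)) = Finset.Icc (i : ℕ) (k : ℕ) :=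
          Finset.Ioc_insert_left (le_of_lt hne)
        rw [← e2, Finset.sum_insert (by simp), ← e1,
          Finset.sum_insert (by simp)]
        have gi : g (i : ℕ) = (-1 : ℝ) ^ (i : ℕ) * (1 / 2) := by
          simp [hg, hne, lt_irrefl, (Nat.ne_of_lt hne)]
        have gk : g (k : ℕ) = (-1 : ℝ) ^ (k : ℕ) * (1 / 2) := by
          simp [hg, hne, lt_irrefl, (Nat.ne_of_lt hne).symm, Nat.lt_asymm hne]
        have gmid : ∑ j ∈ Finset.Ioo (i : ℕ) (k : ℕ), g j =
            (if Even (k : ℕ) then 0 else 1) - (if Even ((i : ℕ) + 1) then 0 else 1) := by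
          have step : ∑ j ∈ Finset.Ioo (i : ℕ) (k : ℕ), g j
              = ∑ j ∈ Finset.Ioo (i : ℕ) (k : ℕ), (-1 : ℝ) ^ j := by
            refine Finset.sum_congr rfl (fun j hj => ?_)
            rw [Finset.mem_Ioo] at hj
            simp [hg, hj.1, hj.2]
          rw [step]
          exact alt_sum_Ioo _ _ hne
        rw [gi, gk, gmid]
        rcases Nat.even_or_odd (i : ℕ) with hi | hi <;>
          rcases Nat.even_or_odd (k : ℕ) with hk | hk <;>
            simp [hi.neg_one_pow, hk.neg_one_pow, Nat.even_add_one,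
              Nat.not_even_iff_odd, hi, hk,
              ← Nat.not_odd_iff_even, ← Nat.not_even_iff_odd] <;> norm_num
      rw [hval, mul_zero]
    · -- i > k : every term vanishes
      apply Finset.sum_eq_zero
      intro j _
      have h1 : ¬ (i < j ∧ j < k) := fun ⟨a, b⟩ => absurd (a.trans b) (not_lt_of_gt h)
      have h2 : ¬ ((i < j ∧ j = k) ∨ (i = j ∧ j < k)) := by
        rintro (⟨a, rfl⟩ | ⟨rfl, b⟩)
        · exact absurd a (not_lt_of_gt h)
        · exact absurd b (not_lt_of_gt h)
      have h3 : ¬ (i = j ∧ j = k) := by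
        rintro ⟨rfl, rfl⟩; exact absurd rfl (ne_of_gt h)
      simp [caxis, h1, h2, h3]
  · intro i
    rw [Finset.sum_eq_single i]
    · simp [caxis]; ring
    · intro j _ hj
      have h1 : ¬ (i < j ∧ j < i) := fun ⟨a, b⟩ => absurd (a.trans b) (lt_irrefl _)
      have h2 : ¬ ((i < j ∧ j = i) ∨ (i = j ∧ j < i)) := by
        rintro (⟨a, rfl⟩ | ⟨rfl, b⟩)
        · exact absurd a (lt_irrefl _)
        · exact absurd b (lt_irrefl _)
      have h3 : ¬ (i = j ∧ j = i) := fun ⟨a, _⟩ => hj (a.symm ▸ rfl)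
      simp [caxis, h1, h2, h3]
    · simp
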